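/- For every t in (0, π/2) and every a in (1, 3/2), the function f(t) = 4t(a−1)cos^2 t − 2a sin t cos t − 2t(a−2) is strictly positive. -/

import Mathlib

open Real Set

lemma aux1 : ∀ s ∈ Set.Ioo 0 Real.pi, s * Real.cos s < Real.sin s := by
  have h : StrictMonoOn (fun s => Real.sin s - s * Real.cos s) (Set.Icc 0 Real.pi) := by
    apply strictMonoOn_of_deriv_pos (convex_Icc _ _)
    · fun_prop
    · intro x hx
      rw [interior_Icc] at hx
      have hd : HasDerivAt (fun s => Real.sin s - s * Real.cos s) (x * Real.sin x) x := by
        have h1 := Real.hasDerivAt_sin x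
        have h2 := (hasDerivAt_id x).mul (Real.hasDerivAt_cos x)
        exact (h1.sub h2).congr_deriv (by simp only [id]; ring)
      rw [hd.deriv]
      exact mul_pos hx.1 (Real.sin_pos_of_pos_of_lt_pi hx.1 hx.2)
  intro s hs
  have := h (Set.mem_Icc.2 ⟨le_refl 0, Real.pi_pos.le⟩)
    (Set.mem_Icc.2 ⟨hs.1.le, hs.2.le⟩) hs.1
  simp at this
  linarith

lemma aux2 : ∀ s ∈ Set.Ioo 0 Real.pi, 0 < 2 - 2 * Real.cos s - s * Real.sin s := by
  have h : StrictMonoOn (fun s => 2 - 2 * Real.cos s - s * Real.sin s) (Set.Icc 0 Real.pi) := by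
    apply strictMonoOn_of_deriv_pos (convex_Icc _ _)
    · fun_prop
    · intro x hx
      rw [interior_Icc] at hx
      have hd : HasDerivAt (fun s => 2 - 2 * Real.cos s - s * Real.sin s)
          (Real.sin x - x * Real.cos x) x := by
        have h1 := ((Real.hasDerivAt_cos x).const_mul (2:ℝ)).const_sub (2:ℝ)
        have h2 := (hasDerivAt_id x).mul (Real.hasDerivAt_sin x)
        exact (h1.sub h2).congr_deriv (by simp only [id]; ring)
      rw [hd.deriv]
      have := aux1 x hx
      linarith
  intro s hs
  have := h (Set.mem_Icc.2 ⟨le_refl 0, Real.pi_pos.le⟩)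
    (Set.mem_Icc.2 ⟨hs.1.le, hs.2.le⟩) hs.1
  simp at this
  linarith

lemma cusa : ∀ s ∈ Set.Ioo 0 Real.pi, 3 * Real.sin s < s * (2 + Real.cos s) := by
  have h : StrictMonoOn (fun s => s * (2 + Real.cos s) - 3 * Real.sin s) (Set.Icc 0 Real.pi) := by
    apply strictMonoOn_of_deriv_pos (convex_Icc _ _)
    · fun_prop
    · intro x hx
      rw [interior_Icc] at hx
      have hd : HasDerivAt (fun s => s * (2 + Real.cos s) - 3 * Real.sin s)
          (2 - 2 * Real.cos x - x * Real.sin x) x := by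
        have h1 := (hasDerivAt_id x).mul ((Real.hasDerivAt_cos x).const_add (2:ℝ))
        have h2 := (Real.hasDerivAt_sin x).const_mul (3:ℝ)
        exact (h1.sub h2).congr_deriv (by simp only [id]; ring)
      rw [hd.deriv]
      exact aux2 x hx
  intro s hs
  have := h (Set.mem_Icc.2 ⟨le_refl 0, Real.pi_pos.le⟩)
    (Set.mem_Icc.2 ⟨hs.1.le, hs.2.le⟩) hs.1
  simp at this
  linarith

theorem f_pos (t : ℝ) (ht : 0 < t) (ht2 : t < Real.pi / 2) (a : ℝ)
    (ha : 1 < a) (ha2 : a < 3 / 2) :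
    0 < 4 * t * (a - 1) * Real.cos t ^ 2 - 2 * a * Real.sin t * Real.cos t
      - 2 * t * (a - 2) := by
  have hs : (2 * t) ∈ Set.Ioo 0 Real.pi := ⟨by linarith, by linarith⟩
  have h1 := aux1 (2 * t) hs
  have h2 := cusa (2 * t) hs
  have hc : Real.cos t ^ 2 = 1 / 2 + Real.cos (2 * t) / 2 := Real.cos_sq t
  have hsin : Real.sin (2 * t) = 2 * Real.sin t * Real.cos t := Real.sin_two_mul t
  rw [hsin] at h1 h2
  rw [hc]
  nlinarith [mul_pos (sub_pos.2 ha2) (sub_pos.2 h1), mul_pos ht (Real.cos_pos_of_mem_Ioo ⟨by linarith [Real.pi_pos], ht2⟩)]
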